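/- Let F be a finite field with |F| = q elements and char(F) = p ≠ 2. Then C(UT_2(F), ⋆) = W + ⟨z_1z_2⟩^{TS(*)} + Id(UT_2(F), ⋆), where W is the F-linear span of all polynomials l·g_1(g_2^{q+l−1} − g_2^l) + g_1^q g_2^l with 1 ≤ l ≤ p (l acting via the natural map ℕ → F) and g_1, g_2 symmetric polynomials; that is, a polynomial is *-central for (UT_2(F), ⋆) if and only if it is a sum of an element of W, an F-linear combination of products uv with u, v skew polynomials, and a *-polynomial identity for (UT_2(F), ⋆). -/
import Mathlib


open scoped BigOperators

set_option maxHeartbeats 1000000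
set_option synthInstance.maxHeartbeats 400000

/-- The algebra of 2×2 upper triangular matrices over `F`. -/
def UT2 (F : Type*) [Field F] : Subalgebra F (Matrix (Fin 2) (Fin 2) F) where
  carrier := {M | M 1 0 = 0}
  mul_mem' := by
    intro a b ha hb
    simp only [Set.mem_setOf_eq] at *
    rw [Matrix.mul_apply, Fin.sum_univ_two, ha, hb]
    ring
  one_mem' := by simp [Matrix.one_apply]
  add_mem' := by
    intro a b ha hb
    simp only [Set.mem_setOf_eq] at *
    simp [Matrix.add_apply, ha, hb]
  zero_mem' := by simp
  algebraMap_mem' := by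
    intro r
    simp [Matrix.algebraMap_matrix_apply]

theorem mem_UT2 (F : Type*) [Field F] {M : Matrix (Fin 2) (Fin 2) F} :
    M ∈ UT2 F ↔ M 1 0 = 0 := Iff.rfl

/-- The involution `⋆` on `UT2 F`: `(a c; 0 b) ↦ (b c; 0 a)`. -/
def starUT (F : Type*) [Field F] (M : ↥(UT2 F)) : ↥(UT2 F) :=
  ⟨!![M.1 1 1, M.1 0 1; 0, M.1 0 0], by rw [mem_UT2]; simp⟩

/-- The involution `s` on `UT2 F`: `(a c; 0 b) ↦ (b -c; 0 a)`. -/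
def starS (F : Type*) [Field F] (M : ↥(UT2 F)) : ↥(UT2 F) :=
  ⟨!![M.1 1 1, -(M.1 0 1); 0, M.1 0 0], by rw [mem_UT2]; simp⟩

/-- The free unital associative `F`-algebra `F⟨Y ∪ Z⟩` on the variables
`y_0, y_1, …` (indexed by `Sum.inl`) and `z_0, z_1, …` (indexed by `Sum.inr`). -/
abbrev FA (F : Type*) [Field F] := FreeAlgebra F (ℕ ⊕ ℕ)

noncomputable def yv (F : Type*) [Field F] (i : ℕ) : FA F := FreeAlgebra.ι F (Sum.inl i)
noncomputable def zv (F : Type*) [Field F] (i : ℕ) : FA F := FreeAlgebra.ι F (Sum.inr i)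

noncomputable def fStarAux (F : Type*) [Field F] : FA F →ₐ[F] (FA F)ᵐᵒᵖ :=
  FreeAlgebra.lift F fun v =>
    MulOpposite.op (Sum.elim (fun i => FreeAlgebra.ι F (Sum.inl i))
      (fun i => -FreeAlgebra.ι F (Sum.inr i)) v)

/-- The involution `*` on `F⟨Y ∪ Z⟩`: the unique `F`-linear anti-automorphism
with `y_i* = y_i` and `z_i* = -z_i`. -/
noncomputable def fStar (F : Type*) [Field F] (f : FA F) : FA F := (fStarAux F f).unop

/-- A symmetric polynomial of `F⟨Y ∪ Z⟩`. -/
def IsSym (F : Type*) [Field F] (f : FA F) : Prop := fStar F f = f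
/-- A skew polynomial of `F⟨Y ∪ Z⟩`. -/
def IsSkew (F : Type*) [Field F] (f : FA F) : Prop := fStar F f = -f

/-- A substitution relative to an involution `σ` on `UT2 F`: an algebra homomorphism
sending each `y_i` to a symmetric element and each `z_i` to a skew-symmetric element. -/
def IsSubstWith (F : Type*) [Field F] (σ : ↥(UT2 F) → ↥(UT2 F))
    (φ : FA F →ₐ[F] ↥(UT2 F)) : Prop :=
  (∀ i, σ (φ (yv F i)) = φ (yv F i)) ∧ (∀ i, σ (φ (zv F i)) = -(φ (zv F i)))

/-- The `*`-polynomial identities of `(UT2 F, σ)`. -/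
def IdWith (F : Type*) [Field F] (σ : ↥(UT2 F) → ↥(UT2 F)) : Submodule F (FA F) where
  carrier := {f | ∀ φ : FA F →ₐ[F] ↥(UT2 F), IsSubstWith F σ φ → φ f = 0}
  add_mem' := by
    intro a b ha hb φ hφ
    rw [map_add, ha φ hφ, hb φ hφ, add_zero]
  zero_mem' := by intro φ _; exact map_zero φ
  smul_mem' := by
    intro c x hx φ hφ
    rw [map_smul, hx φ hφ, smul_zero]

/-- The `*`-central polynomials of `(UT2 F, σ)`. -/
def CWith (F : Type*) [Field F] (σ : ↥(UT2 F) → ↥(UT2 F)) : Submodule F (FA F) where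
  carrier := {f | ∀ φ : FA F →ₐ[F] ↥(UT2 F), IsSubstWith F σ φ →
    φ f ∈ Subalgebra.center F ↥(UT2 F)}
  add_mem' := by
    intro a b ha hb φ hφ
    rw [map_add]; exact add_mem (ha φ hφ) (hb φ hφ)
  zero_mem' := by intro φ _; rw [map_zero]; exact zero_mem _
  smul_mem' := by
    intro c x hx φ hφ
    rw [map_smul]; exact Subalgebra.smul_mem _ (hx φ hφ) c

/-- `⟨z₁z₂⟩^{TS(*)}`: the `F`-linear span of all products of two skew polynomials. -/
def TSz (F : Type*) [Field F] : Submodule F (FA F) :=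
  Submodule.span F {f : FA F | ∃ u v, IsSkew F u ∧ IsSkew F v ∧ f = u * v}

section Helpers

variable {F : Type*} [Field F]

/-- symmetric-shaped element `(s t; 0 s)` of `UT2 F`. -/
def mE (s t : F) : ↥(UT2 F) := ⟨!![s, t; 0, s], by rw [mem_UT2]; simp⟩

lemma mE_val (s t : F) : (mE s t : Matrix (Fin 2) (Fin 2) F) = !![s, t; 0, s] := rfl

lemma mE_one : (1 : ↥(UT2 F)) = mE 1 0 := by
  apply Subtype.ext
  rw [mE_val]
  ext i j
  fin_cases i <;> fin_cases j <;> simp [Matrix.one_apply]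

lemma mE_add (s t s' t' : F) : mE s t + mE s' t' = mE (s + s') (t + t') := by
  apply Subtype.ext
  show (mE s t : Matrix (Fin 2) (Fin 2) F) + mE s' t' = _
  rw [mE_val, mE_val, mE_val]
  ext i j
  fin_cases i <;> fin_cases j <;> simp

lemma mE_sub (s t s' t' : F) : mE s t - mE s' t' = mE (s - s') (t - t') := by
  apply Subtype.ext
  show (mE s t : Matrix (Fin 2) (Fin 2) F) - mE s' t' = _
  rw [mE_val, mE_val, mE_val]
  ext i j
  fin_cases i <;> fin_cases j <;> simp

lemma mE_smul (c s t : F) : c • mE s t = mE (c * s) (c * t) := by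
  apply Subtype.ext
  show c • (mE s t : Matrix (Fin 2) (Fin 2) F) = _
  rw [mE_val, mE_val]
  ext i j
  fin_cases i <;> fin_cases j <;> simp

lemma mE_mul (s t s' t' : F) : mE s t * mE s' t' = mE (s * s') (s * t' + t * s') := by
  apply Subtype.ext
  show (mE s t : Matrix (Fin 2) (Fin 2) F) * mE s' t' = _
  rw [mE_val, mE_val, mE_val]
  ext i j
  fin_cases i <;> fin_cases j <;>
    simp [Matrix.mul_apply, Fin.sum_univ_two]

lemma mE_pow (s t : F) : ∀ m : ℕ, 1 ≤ m → (mE s t) ^ m = mE (s ^ m) ((m : F) * s ^ (m - 1) * t) := by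
  intro m hm
  induction m with
  | zero => omega
  | succ n ih =>
    rcases Nat.eq_or_lt_of_le hm with h | h
    · simp [← h, mE_smul]
    · have hn : 1 ≤ n := by omega
      obtain ⟨k, rfl⟩ : ∃ k, n = k + 1 := ⟨n - 1, by omega⟩
      rw [pow_succ, ih hn, mE_mul]
      simp only [Nat.add_sub_cancel]
      congr 1
      · rw [← pow_succ]
      · push_cast; ring

lemma mE_smul_one (s : F) : mE s 0 = s • (1 : ↥(UT2 F)) := by
  rw [mE_one, mE_smul, mul_one, mul_zero]

lemma mE_central {s t : F} (h : t = 0) : mE s t ∈ Subalgebra.center F ↥(UT2 F) := by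
  subst h
  rw [mE_smul_one]
  exact Subalgebra.smul_mem _ (Subalgebra.one_mem _) s

lemma central_eq {M : ↥(UT2 F)} (h : M ∈ Subalgebra.center F ↥(UT2 F)) :
    M = mE ((M : Matrix (Fin 2) (Fin 2) F) 0 0) 0 := by
  have hc := Subalgebra.mem_center_iff.mp h
  have hE11 : (!![1, 0; 0, 0] : Matrix (Fin 2) (Fin 2) F) ∈ UT2 F := by rw [mem_UT2]; simp
  have hE12 : (!![0, 1; 0, 0] : Matrix (Fin 2) (Fin 2) F) ∈ UT2 F := by rw [mem_UT2]; simp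
  have h1 := congrArg (fun X : ↥(UT2 F) => (X : Matrix (Fin 2) (Fin 2) F) 0 1) (hc ⟨_, hE11⟩)
  have h2 := congrArg (fun X : ↥(UT2 F) => (X : Matrix (Fin 2) (Fin 2) F) 0 1) (hc ⟨_, hE12⟩)
  simp only [MulMemClass.coe_mul, Matrix.mul_apply, Fin.sum_univ_two] at h1 h2
  have hM10 : (M : Matrix (Fin 2) (Fin 2) F) 1 0 = 0 := M.2
  simp [hM10] at h1 h2
  -- h1 : M 0 1 = 0 (in some form), h2 : M 0 0 = M 1 1 (in some form)
  apply Subtype.ext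
  rw [mE_val]
  ext i j
  fin_cases i <;> fin_cases j <;> simp [hM10] <;> simp_all

end Helpers

section StarLemmas

variable {F : Type*} [Field F]

lemma starUT_val (M : ↥(UT2 F)) :
    (starUT F M : Matrix (Fin 2) (Fin 2) F) =
      !![(M : Matrix (Fin 2) (Fin 2) F) 1 1, (M : Matrix (Fin 2) (Fin 2) F) 0 1; 0,
         (M : Matrix (Fin 2) (Fin 2) F) 0 0] := rfl

lemma starUT_add (M N : ↥(UT2 F)) : starUT F (M + N) = starUT F M + starUT F N := by
  apply Subtype.ext
  show _ = (starUT F M : Matrix (Fin 2) (Fin 2) F) + starUT F N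
  rw [starUT_val, starUT_val, starUT_val]
  show (!![_, _; _, _] : Matrix (Fin 2) (Fin 2) F) = _
  ext i j
  fin_cases i <;> fin_cases j <;> simp

lemma starUT_smul (c : F) (M : ↥(UT2 F)) : starUT F (c • M) = c • starUT F M := by
  apply Subtype.ext
  show _ = c • (starUT F M : Matrix (Fin 2) (Fin 2) F)
  rw [starUT_val, starUT_val]
  show (!![_, _; _, _] : Matrix (Fin 2) (Fin 2) F) = _
  ext i j
  fin_cases i <;> fin_cases j <;> simp

lemma starUT_one : starUT F (1 : ↥(UT2 F)) = 1 := by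
  apply Subtype.ext
  rw [starUT_val]
  show _ = (1 : Matrix (Fin 2) (Fin 2) F)
  ext i j
  fin_cases i <;> fin_cases j <;> simp [Matrix.one_apply]

lemma starUT_mul (M N : ↥(UT2 F)) : starUT F (M * N) = starUT F N * starUT F M := by
  have hM : (M : Matrix (Fin 2) (Fin 2) F) 1 0 = 0 := M.2
  have hN : (N : Matrix (Fin 2) (Fin 2) F) 1 0 = 0 := N.2
  apply Subtype.ext
  show _ = (starUT F N : Matrix (Fin 2) (Fin 2) F) * starUT F M
  rw [starUT_val, starUT_val, starUT_val]
  have hMN : ((M * N : ↥(UT2 F)) : Matrix (Fin 2) (Fin 2) F)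
      = (M : Matrix (Fin 2) (Fin 2) F) * N := rfl
  simp only [hMN, Matrix.mul_apply, Fin.sum_univ_two, hM, hN]
  ext i j
  fin_cases i <;> fin_cases j <;> simp [Matrix.mul_apply, Fin.sum_univ_two, hM, hN] <;> ring

lemma starUT_mE (s t : F) : starUT F (mE s t) = mE s t := by
  apply Subtype.ext
  rw [starUT_val, mE_val]
  ext i j
  fin_cases i <;> fin_cases j <;> simp

lemma starUT_algebraMap (c : F) :
    starUT F (algebraMap F ↥(UT2 F) c) = algebraMap F ↥(UT2 F) c := by
  rw [Algebra.algebraMap_eq_smul_one, starUT_smul, starUT_one]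

lemma sym_elem {M : ↥(UT2 F)} (h : starUT F M = M) :
    M = mE ((M : Matrix (Fin 2) (Fin 2) F) 0 0) ((M : Matrix (Fin 2) (Fin 2) F) 0 1) := by
  have h00 := congrArg (fun X : ↥(UT2 F) => (X : Matrix (Fin 2) (Fin 2) F) 0 0) h
  simp only [starUT_val] at h00
  simp at h00
  have hM10 : (M : Matrix (Fin 2) (Fin 2) F) 1 0 = 0 := M.2
  apply Subtype.ext
  rw [mE_val]
  ext i j
  fin_cases i <;> fin_cases j <;> simp [hM10, h00]

lemma skew_elem {M : ↥(UT2 F)} (h2 : (2 : F) ≠ 0) (h : starUT F M = -M) :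
    ((M : Matrix (Fin 2) (Fin 2) F) 0 1 = 0) ∧
      ((M : Matrix (Fin 2) (Fin 2) F) 1 1 = -(M : Matrix (Fin 2) (Fin 2) F) 0 0) := by
  have h01 := congrArg (fun X : ↥(UT2 F) => (X : Matrix (Fin 2) (Fin 2) F) 0 1) h
  have h00 := congrArg (fun X : ↥(UT2 F) => (X : Matrix (Fin 2) (Fin 2) F) 0 0) h
  have hneg : ((-M : ↥(UT2 F)) : Matrix (Fin 2) (Fin 2) F)
      = -(M : Matrix (Fin 2) (Fin 2) F) := rfl
  simp only [starUT_val, hneg] at h01 h00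
  simp only [Matrix.cons_val', Matrix.cons_val_zero, Matrix.cons_val_one, Matrix.head_cons,
    Matrix.empty_val', Matrix.cons_val_fin_one, Matrix.head_fin_const, Matrix.neg_apply,
    Matrix.cons_val_fin_one] at h01 h00
  norm_num at h01 h00
  constructor
  · have : (2 : F) * (M : Matrix (Fin 2) (Fin 2) F) 0 1 = 0 := by linear_combination h01
    rcases mul_eq_zero.mp this with h | h
    · exact absurd h h2
    · exact h
  · linear_combination h00

lemma skew_mul {M N : ↥(UT2 F)} (h2 : (2 : F) ≠ 0) (hM : starUT F M = -M)
    (hN : starUT F N = -N) :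
    M * N = mE ((M : Matrix (Fin 2) (Fin 2) F) 0 0 * (N : Matrix (Fin 2) (Fin 2) F) 0 0) 0 := by
  obtain ⟨hM01, hM11⟩ := skew_elem h2 hM
  obtain ⟨hN01, hN11⟩ := skew_elem h2 hN
  have hM10 : (M : Matrix (Fin 2) (Fin 2) F) 1 0 = 0 := M.2
  have hN10 : (N : Matrix (Fin 2) (Fin 2) F) 1 0 = 0 := N.2
  apply Subtype.ext
  show (M : Matrix (Fin 2) (Fin 2) F) * N = _
  rw [mE_val]
  ext i j
  fin_cases i <;> fin_cases j <;>
    simp [Matrix.mul_apply, Fin.sum_univ_two, hM01, hM11, hM10, hN01, hN11, hN10]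

lemma fStar_add (a b : FA F) : fStar F (a + b) = fStar F a + fStar F b := by
  simp [fStar, map_add]

lemma fStar_smul (c : F) (a : FA F) : fStar F (c • a) = c • fStar F a := by
  simp [fStar, map_smul]

lemma fStar_neg (a : FA F) : fStar F (-a) = -fStar F a := by
  simp [fStar, map_neg]

lemma fStar_mul (a b : FA F) : fStar F (a * b) = fStar F b * fStar F a := by
  simp [fStar, map_mul]

lemma fStar_one : fStar F (1 : FA F) = 1 := by
  simp [fStar, map_one]

lemma fStar_algebraMap (c : F) :
    fStar F (algebraMap F (FA F) c) = algebraMap F (FA F) c := by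
  simp [fStar, AlgHom.commutes, MulOpposite.algebraMap_apply]

lemma fStar_yv (i : ℕ) : fStar F (yv F i) = yv F i := by
  simp [fStar, fStarAux, yv, FreeAlgebra.lift_ι_apply]

lemma fStar_zv (i : ℕ) : fStar F (zv F i) = -(zv F i) := by
  simp [fStar, fStarAux, zv, FreeAlgebra.lift_ι_apply]

lemma fStar_fStar (a : FA F) : fStar F (fStar F a) = a := by
  induction a using FreeAlgebra.induction with
  | grade0 r => rw [fStar_algebraMap, fStar_algebraMap]
  | grade1 x =>
    rcases x with i | i
    · rw [show FreeAlgebra.ι F (Sum.inl i) = yv F i from rfl, fStar_yv, fStar_yv]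
    · rw [show FreeAlgebra.ι F (Sum.inr i) = zv F i from rfl, fStar_zv, fStar_neg, fStar_zv,
        neg_neg]
  | mul a b ha hb => rw [fStar_mul, fStar_mul, ha, hb]
  | add a b ha hb => rw [fStar_add, fStar_add, ha, hb]

lemma subst_fStar (φ : FA F →ₐ[F] ↥(UT2 F)) (hφ : IsSubstWith F (starUT F) φ) (a : FA F) :
    φ (fStar F a) = starUT F (φ a) := by
  induction a using FreeAlgebra.induction with
  | grade0 r => rw [fStar_algebraMap, AlgHom.commutes, starUT_algebraMap]
  | grade1 x =>
    rcases x with i | i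
    · rw [show FreeAlgebra.ι F (Sum.inl i) = yv F i from rfl, fStar_yv, hφ.1 i]
    · rw [show FreeAlgebra.ι F (Sum.inr i) = zv F i from rfl, fStar_zv, map_neg, hφ.2 i]
  | mul a b ha hb => rw [fStar_mul, map_mul, map_mul, ha, hb, starUT_mul]
  | add a b ha hb => rw [fStar_add, map_add, map_add, ha, hb, starUT_add]

end StarLemmas

theorem stmt_18 (F : Type*) [Field F] [Fintype F] (q : ℕ) (hq : Fintype.card F = q)
    (p : ℕ) [CharP F p] (hp : p ≠ 2) :
    CWith F (starUT F) =
      Submodule.span F {f : FA F | ∃ l : ℕ, 1 ≤ l ∧ l ≤ p ∧ ∃ g₁ g₂,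
          IsSym F g₁ ∧ IsSym F g₂ ∧
          f = (l : F) • (g₁ * (g₂ ^ (q + l - 1) - g₂ ^ l)) + g₁ ^ q * g₂ ^ l} ⊔
        TSz F ⊔ IdWith F (starUT F) := by
  subst hq
  have hq1 : 1 ≤ Fintype.card F := Fintype.card_pos
  have hq0 : ((Fintype.card F : ℕ) : F) = 0 := FiniteField.cast_card_eq_zero F
  have hpow : ∀ a : F, a ^ Fintype.card F = a := FiniteField.pow_card
  have hpp : p.Prime := CharP.char_is_prime F p
  have h2 : (2 : F) ≠ 0 := by
    intro h
    have := (CharP.cast_eq_zero_iff F p 2).mp h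
    exact hp ((Nat.prime_dvd_prime_iff_eq hpp Nat.prime_two).mp this)
  have hpowadd : ∀ (s : F) (m : ℕ), s ^ (Fintype.card F + m) = s ^ (m + 1) := by
    intro s m
    rw [pow_add, hpow, pow_succ, mul_comm]
  have key : ∀ l : ℕ, 1 ≤ l → ∀ s₁ t₁ s₂ t₂ : F,
      (l : F) • (mE s₁ t₁ * ((mE s₂ t₂) ^ (Fintype.card F + l - 1) - (mE s₂ t₂) ^ l)) +
        (mE s₁ t₁) ^ Fintype.card F * (mE s₂ t₂) ^ l ∈ Subalgebra.center F ↥(UT2 F) := by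
    intro l hl1 s₁ t₁ s₂ t₂
    have e1 : Fintype.card F + l - 1 = Fintype.card F + (l - 1) := by omega
    have he1 : s₂ ^ (Fintype.card F + l - 1) = s₂ ^ l := by
      rw [e1, hpowadd]
      congr 1
      omega
    have hc1 : ((Fintype.card F + l - 1 : ℕ) : F) = (l : F) - 1 := by
      rw [e1, Nat.cast_add, hq0, zero_add, Nat.cast_sub hl1, Nat.cast_one]
    rw [mE_pow s₂ t₂ _ (by omega), mE_pow s₂ t₂ _ hl1, mE_pow s₁ t₁ _ hq1, mE_sub, mE_mul,
      mE_smul, mE_mul, mE_add]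
    apply mE_central
    rcases Nat.lt_or_ge l 2 with hl | hl
    · have hl' : l = 1 := by omega
      subst hl'
      rw [hc1, he1, hpow s₁, hq0]
      push_cast
      ring
    · have he2 : s₂ ^ (Fintype.card F + l - 1 - 1) = s₂ ^ (l - 1) := by
        rw [show Fintype.card F + l - 1 - 1 = Fintype.card F + (l - 2) by omega, hpowadd]
        congr 1
        omega
      rw [hc1, he1, he2, hpow s₁, hq0]
      ring
  refine le_antisymm ?_ (sup_le (sup_le ?_ ?_) ?_)
  · -- hard direction
    intro f hf
    set g : FA F := (2 : F)⁻¹ • (f + fStar F f) with hg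
    have hsymg : IsSym F g := by
      unfold IsSym
      rw [hg, fStar_smul, fStar_add, fStar_fStar, add_comm]
    have hid : f - g ^ Fintype.card F ∈ IdWith F (starUT F) := by
      intro φ hφ
      have hcent := hf φ hφ
      have hfc := central_eq hcent
      have hstar : φ (fStar F f) = φ f := by
        rw [subst_fStar φ hφ, hfc, starUT_mE, ← hfc]
      have hg' : φ g = φ f := by
        rw [hg, map_smul, map_add, hstar]
        rw [hfc, mE_add, mE_smul]
        congr 1
        · linear_combination ((φ f : Matrix (Fin 2) (Fin 2) F) 0 0) * mul_inv_cancel₀ h2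
        · norm_num
      rw [map_sub, map_pow, hg', hfc, mE_pow _ _ _ hq1, mul_zero, hpow, sub_self]
    have hspan : g ^ Fintype.card F ∈ Submodule.span F {f : FA F | ∃ l : ℕ, 1 ≤ l ∧ l ≤ p ∧
        ∃ g₁ g₂, IsSym F g₁ ∧ IsSym F g₂ ∧
          f = (l : F) • (g₁ * (g₂ ^ (Fintype.card F + l - 1) - g₂ ^ l)) +
            g₁ ^ Fintype.card F * g₂ ^ l} := by
      apply Submodule.subset_span
      refine ⟨p, hpp.pos, le_refl p, g, 1, hsymg, fStar_one, ?_⟩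
      simp
    have hf_eq : f = g ^ Fintype.card F + (f - g ^ Fintype.card F) := by abel
    rw [hf_eq]
    exact add_mem (Submodule.mem_sup_left (Submodule.mem_sup_left hspan))
      (Submodule.mem_sup_right hid)
  · -- W ≤ CWith
    rw [Submodule.span_le]
    rintro f ⟨l, hl1, hlp, g₁, g₂, hg₁, hg₂, rfl⟩
    intro φ hφ
    have hsA : starUT F (φ g₁) = φ g₁ := by rw [← subst_fStar φ hφ, hg₁]
    have hsB : starUT F (φ g₂) = φ g₂ := by rw [← subst_fStar φ hφ, hg₂]
    have hA := sym_elem hsA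
    have hB := sym_elem hsB
    simp only [map_add, map_smul, map_mul, map_sub, map_pow]
    rw [hA, hB]
    exact key l hl1 _ _ _ _
  · -- TSz ≤ CWith
    rw [TSz, Submodule.span_le]
    rintro f ⟨u, v, hu, hv, rfl⟩
    intro φ hφ
    have hsu : starUT F (φ u) = -(φ u) := by rw [← subst_fStar φ hφ, hu, map_neg]
    have hsv : starUT F (φ v) = -(φ v) := by rw [← subst_fStar φ hφ, hv, map_neg]
    rw [map_mul, skew_mul h2 hsu hsv]
    exact mE_central rfl
  · -- Id ≤ CWith
    intro f hf φ hφ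
    rw [hf φ hφ]
    exact Subalgebra.zero_mem _
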